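/- Let {Q_t} be defined by Q_0 = 0 and, for each t ≥ 0, Q_{t+1}(s_t,a_t) = Q_t(s_t,a_t) + α_t (R(s_t,a_t) + γ Σ_{a'} π_{t+1}(a'|s_{t+1}') Q_t(s_{t+1}',a') − Q_t(s_t,a_t)) and Q_{t+1}(s,a) = Q_t(s,a) for (s,a) ≠ (s_t,a_t), where (s_t,a_t,s_{t+1}') ∈ S × A × S are arbitrary samples, π_{t+1} are arbitrary policies, and α_t ∈ [0,1]. Then for all nonnegative integers t₁ < t₂, ‖Q_{t₁} − Q_{t₂}‖∞ ≤ (Σ_{u=t₁}^{t₂−1} α_u)/(1−γ). -/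

import Mathlib

noncomputable section

/-- A policy assigns to each state a probability distribution over actions. -/
def IsPolicy {S A : Type*} [Fintype A] (π : S → A → ℝ) : Prop :=
  (∀ s a, 0 ≤ π s a) ∧ ∀ s, ∑ a, π s a = 1

/-- A transition kernel assigns to each state-action pair a probability distribution over states. -/
def IsKernel {S A : Type*} [Fintype S] (p : S → A → S → ℝ) : Prop :=
  (∀ s a s', 0 ≤ p s a s') ∧ ∀ s a, ∑ s', p s a s' = 1

/-- Sup norm on `S × A → ℝ` (functions `S → A → ℝ`). -/
def supNorm {S A : Type*} [Fintype S] [Fintype A] [Nonempty S] [Nonempty A]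
    (Q : S → A → ℝ) : ℝ :=
  Finset.univ.sup' Finset.univ_nonempty (fun sa : S × A => |Q sa.1 sa.2|)

/-- Total variation distance between two distributions on a finite set. -/
def dTV {Ω : Type*} [Fintype Ω] (p₁ p₂ : Ω → ℝ) : ℝ :=
  (∑ x, |p₁ x - p₂ x|) / 2

/-- Weighted ℓ₂ norm with weights ν. -/
def nuNorm {S A : Type*} [Fintype S] [Fintype A] (ν : S → A → ℝ) (Q : S → A → ℝ) : ℝ :=
  Real.sqrt (∑ s, ∑ a, ν s a * (Q s a) ^ 2)

/-- Weighted ℓ₂ inner product with weights ν. -/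
def nuInner {S A : Type*} [Fintype S] [Fintype A] (ν : S → A → ℝ) (Q₁ Q₂ : S → A → ℝ) : ℝ :=
  ∑ s, ∑ a, ν s a * Q₁ s a * Q₂ s a

/-- Bellman operator associated with a policy π. -/
def bellman {S A : Type*} [Fintype S] [Fintype A]
    (p : S → A → S → ℝ) (R : S → A → ℝ) (γ : ℝ) (π : S → A → ℝ)
    (Q : S → A → ℝ) : S → A → ℝ :=
  fun s a => R s a + γ * ∑ s', p s a s' * ∑ a', π s' a' * Q s' a'

/-- Bellman optimality operator. -/
def bellmanOpt {S A : Type*} [Fintype S] [Fintype A] [Nonempty A]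
    (p : S → A → S → ℝ) (R : S → A → ℝ) (γ : ℝ)
    (Q : S → A → ℝ) : S → A → ℝ :=
  fun s a => R s a + γ * ∑ s', p s a s' *
    Finset.univ.sup' Finset.univ_nonempty (fun a' => Q s' a')

/-- Expected operator F̄(Q,π) = (I − D)Q + D H_π Q, where D has diagonal entries μ_b(s)π_b(a|s). -/
def Fbar {S A : Type*} [Fintype S] [Fintype A]
    (p : S → A → S → ℝ) (R : S → A → ℝ) (γ : ℝ)
    (μb : S → ℝ) (πb : S → A → ℝ) (π : S → A → ℝ) (Q : S → A → ℝ) : S → A → ℝ :=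
  fun s a => (1 - μb s * πb s a) * Q s a + μb s * πb s a * bellman p R γ π Q s a

/-- Importance-sampling TD operator, for y = ((s₁,a₁),(s₂,a₂)). -/
def FIS {S A : Type*} [Fintype S] [Fintype A] [DecidableEq S] [DecidableEq A]
    (R : S → A → ℝ) (γ : ℝ) (πb : S → A → ℝ)
    (Q : S → A → ℝ) (y : (S × A) × S × A) (π : S → A → ℝ) : S → A → ℝ :=
  fun s a => if (s, a) = y.1 then
      R y.1.1 y.1.2 + γ * (π y.2.1 y.2.2 / πb y.2.1 y.2.2) * Q y.2.1 y.2.2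
    else Q s a

/-- Expected-TD operator, for u = (s₁,a₁,s₂). -/
def FETD {S A : Type*} [Fintype S] [Fintype A] [DecidableEq S] [DecidableEq A]
    (R : S → A → ℝ) (γ : ℝ)
    (Q : S → A → ℝ) (u : S × A × S) (π : S → A → ℝ) : S → A → ℝ :=
  fun s a => if (s, a) = (u.1, u.2.1) then
      R u.1 u.2.1 + γ * ∑ a', π u.2.2 a' * Q u.2.2 a'
    else Q s a

/-- State transition matrix induced by a policy. -/
def Pmat {S A : Type*} [Fintype A] (p : S → A → S → ℝ) (π : S → A → ℝ) : Matrix S S ℝ :=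
  Matrix.of fun s s' => ∑ a, π s a * p s a s'

end

/-- Drift bound for the ETD critic iterates (Lemma B.5, part 3). -/
theorem ETD_iterates_drift {S A : Type*} [Fintype S] [Fintype A] [Nonempty S] [Nonempty A]
    (R : S → A → ℝ) (hR : ∀ s a, 0 ≤ R s a ∧ R s a ≤ 1)
    (γ : ℝ) (hγ : 0 < γ ∧ γ < 1)
    (st : ℕ → S) (at' : ℕ → A) (st' : ℕ → S)
    (πs : ℕ → S → A → ℝ) (hπs : ∀ t, IsPolicy (πs t))
    (α : ℕ → ℝ) (hα : ∀ t, 0 ≤ α t ∧ α t ≤ 1)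
    (Q : ℕ → S → A → ℝ)
    (hQ0 : ∀ s a, Q 0 s a = 0)
    (hupd : ∀ t, Q (t + 1) (st t) (at' t)
      = Q t (st t) (at' t) + α t * (R (st t) (at' t)
          + γ * (∑ a', πs (t + 1) (st' t) a' * Q t (st' t) a') - Q t (st t) (at' t)))
    (hrest : ∀ t s a, (s, a) ≠ (st t, at' t) → Q (t + 1) s a = Q t s a)
    (t₁ t₂ : ℕ) (h : t₁ < t₂) :
    supNorm (fun s a => Q t₁ s a - Q t₂ s a)
      ≤ (∑ u ∈ Finset.Ico t₁ t₂, α u) / (1 - γ) := by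
  obtain ⟨hγ0, hγ1⟩ := hγ
  have h1γ : 0 < 1 - γ := by linarith
  -- bound on the TD target given bounds on Q at time t
  have hTb : ∀ t, (∀ s a, 0 ≤ Q t s a ∧ Q t s a ≤ 1 / (1 - γ)) →
      0 ≤ R (st t) (at' t) + γ * (∑ a', πs (t + 1) (st' t) a' * Q t (st' t) a') ∧
      R (st t) (at' t) + γ * (∑ a', πs (t + 1) (st' t) a' * Q t (st' t) a')
        ≤ 1 / (1 - γ) := by
    intro t ih
    obtain ⟨hπpos, hπsum⟩ := hπs (t + 1)
    have hsum0 : 0 ≤ ∑ a', πs (t + 1) (st' t) a' * Q t (st' t) a' :=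
      Finset.sum_nonneg fun a' _ => mul_nonneg (hπpos _ _) (ih _ _).1
    have hsumle : ∑ a', πs (t + 1) (st' t) a' * Q t (st' t) a' ≤ 1 / (1 - γ) := by
      calc ∑ a', πs (t + 1) (st' t) a' * Q t (st' t) a'
          ≤ ∑ a', πs (t + 1) (st' t) a' * (1 / (1 - γ)) :=
            Finset.sum_le_sum fun a' _ =>
              mul_le_mul_of_nonneg_left (ih _ _).2 (hπpos _ _)
        _ = 1 / (1 - γ) := by rw [← Finset.sum_mul, hπsum, one_mul]
    constructor
    · have := (hR (st t) (at' t)).1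
      nlinarith
    · have h1 := (hR (st t) (at' t)).2
      have h2 : γ * (∑ a', πs (t + 1) (st' t) a' * Q t (st' t) a') ≤ γ * (1 / (1 - γ)) :=
        mul_le_mul_of_nonneg_left hsumle (le_of_lt hγ0)
      have hone : (1 : ℝ) + γ * (1 / (1 - γ)) = 1 / (1 - γ) := by field_simp; ring
      linarith
  -- boundedness of iterates
  have hbnd : ∀ t s a, 0 ≤ Q t s a ∧ Q t s a ≤ 1 / (1 - γ) := by
    intro t
    induction t with
    | zero =>
      intro s a
      rw [hQ0]
      exact ⟨le_rfl, by positivity⟩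
    | succ n ih =>
      intro s a
      obtain ⟨hT0, hT1⟩ := hTb n ih
      by_cases hsa : (s, a) = (st n, at' n)
      · obtain ⟨hs, ha⟩ := Prod.mk.inj hsa
        rw [hs, ha, hupd n]
        obtain ⟨hα0, hα1⟩ := hα n
        obtain ⟨hq0, hq1⟩ := ih (st n) (at' n)
        constructor
        · nlinarith
        · nlinarith
      · rw [hrest n s a hsa]
        exact ih s a
  -- one-step drift
  have hstep : ∀ t s a, |Q t s a - Q (t + 1) s a| ≤ α t / (1 - γ) := by
    intro t s a
    by_cases hsa : (s, a) = (st t, at' t)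
    · obtain ⟨hs, ha⟩ := Prod.mk.inj hsa
      rw [hs, ha, hupd t]
      obtain ⟨hα0, hα1⟩ := hα t
      obtain ⟨hq0, hq1⟩ := hbnd t (st t) (at' t)
      obtain ⟨hT0, hT1⟩ := hTb t (hbnd t)
      set T := R (st t) (at' t)
          + γ * (∑ a', πs (t + 1) (st' t) a' * Q t (st' t) a') with hTdef
      have heq : Q t (st t) (at' t) - (Q t (st t) (at' t) + α t * (T - Q t (st t) (at' t)))
          = - (α t * (T - Q t (st t) (at' t))) := by ring
      rw [heq, abs_neg, abs_mul, abs_of_nonneg hα0]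
      have habs : |T - Q t (st t) (at' t)| ≤ 1 / (1 - γ) := by
        rw [abs_le]; constructor <;> linarith
      calc α t * |T - Q t (st t) (at' t)| ≤ α t * (1 / (1 - γ)) :=
            mul_le_mul_of_nonneg_left habs hα0
        _ = α t / (1 - γ) := by ring
    · rw [hrest t s a hsa, sub_self, abs_zero]
      exact div_nonneg (hα t).1 (le_of_lt h1γ)
  -- telescoping
  have htel : ∀ n, t₁ ≤ n → ∀ s a,
      |Q t₁ s a - Q n s a| ≤ ∑ u ∈ Finset.Ico t₁ n, α u / (1 - γ) := by
    intro n hn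
    induction n, hn using Nat.le_induction with
    | base => intro s a; simp
    | succ n hn ih =>
      intro s a
      have h1 := ih s a
      have h2 := hstep n s a
      rw [Finset.sum_Ico_succ_top hn]
      calc |Q t₁ s a - Q (n + 1) s a|
          = |(Q t₁ s a - Q n s a) + (Q n s a - Q (n + 1) s a)| := by ring_nf
        _ ≤ |Q t₁ s a - Q n s a| + |Q n s a - Q (n + 1) s a| := abs_add_le _ _
        _ ≤ (∑ u ∈ Finset.Ico t₁ n, α u / (1 - γ)) + α n / (1 - γ) := add_le_add h1 h2
  rw [Finset.sum_div]
  apply Finset.sup'_le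
  intro sa _
  exact htel t₂ (le_of_lt h) sa.1 sa.2
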